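/- With probability 1 over G, for every set S \subseteq [n] of size at most d that is not a clique in G, the pseudoexpectation satisfies \tilde{E}_G[x_S] = 0. -/

import Mathlib

open Finset

attribute [local instance] Classical.propDecidable

namespace PlantedClique

/-- The set of potential edges of a graph on vertex set `Fin n`:
unordered pairs of distinct vertices. -/
abbrev Edge (n : ℕ) := {e : Sym2 (Fin n) // ¬ e.IsDiag}

/-- A graph on vertex set `Fin n`, identified with its Boolean edge indicators. -/
abbrev Graph (n : ℕ) := Edge n → Bool

/-- The `±1` edge indicator `G_e`: `+1` if `e` is an edge of `G` and `-1` otherwise. -/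
noncomputable def edgeSign {n : ℕ} (G : Graph n) (e : Edge n) : ℝ := if G e then 1 else -1

/-- The Fourier character `χ_T(G) = ∏_{e ∈ T} G_e`. -/
noncomputable def chi {n : ℕ} (G : Graph n) (T : Finset (Edge n)) : ℝ := ∏ e ∈ T, edgeSign G e

/-- `𝓥(T)`: the set of vertices incident to at least one edge of `T`. -/
noncomputable def vertsOf {n : ℕ} (T : Finset (Edge n)) : Finset (Fin n) :=
  Finset.univ.filter fun v => ∃ e ∈ T, v ∈ (e : Sym2 (Fin n))

/-- `i` and `j` are joined by an edge of `G`. -/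
def hasEdge {n : ℕ} (G : Graph n) (i j : Fin n) : Prop :=
  ∃ e : Edge n, (e : Sym2 (Fin n)) = s(i, j) ∧ G e = true

/-- `S` is a clique in `G`: every pair of distinct vertices of `S` is joined by an edge. -/
def IsClique {n : ℕ} (G : Graph n) (S : Finset (Fin n)) : Prop :=
  ∀ i ∈ S, ∀ j ∈ S, i ≠ j → hasEdge G i j

/-- The pseudo-calibrated pseudoexpectation on monomials:
`Ẽ_G[x_S] = ∑_{T : |𝓥(T) ∪ S| ≤ τ} (ω/n)^{|𝓥(T) ∪ S|} χ_T(G)`. -/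
noncomputable def tE {n : ℕ} (τ : ℕ) (ω : ℝ) (G : Graph n) (S : Finset (Fin n)) : ℝ :=
  ∑ T : Finset (Edge n),
    if (vertsOf T ∪ S).card ≤ τ then (ω / n) ^ (vertsOf T ∪ S).card * chi G T else 0

/-- With probability 1 (i.e. for every graph `G`), for every set `S` of
size at most `d` that is not a clique in `G`, the pseudoexpectation satisfies
`Ẽ_G[x_S] = 0`. -/
theorem pE_clique_constraints (n d τ : ℕ) (ω : ℝ) (G : Graph n) (S : Finset (Fin n))
    (hSd : S.card ≤ d) (hS : ¬ IsClique G S) :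
    tE τ ω G S = 0 := by
  simp only [IsClique, not_forall] at hS
  obtain ⟨i, hi, j, hj, hij, hne⟩ := hS
  have hdiag : ¬ (s(i, j) : Sym2 (Fin n)).IsDiag := by simpa using hij
  set e0 : Edge n := ⟨s(i, j), hdiag⟩ with he0
  have hG : G e0 = false := by
    by_contra h
    exact hne ⟨e0, rfl, by simpa using h⟩
  -- key: for any T, vertsOf (insert e0 T) ∪ S = vertsOf T ∪ S
  have hverts : ∀ T : Finset (Edge n), vertsOf (insert e0 T) ∪ S = vertsOf T ∪ S := by
    intro T
    ext v
    simp only [vertsOf, mem_union, mem_filter, mem_univ, true_and, Finset.mem_insert]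
    constructor
    · rintro (⟨e, (rfl | heT), hv⟩ | hv)
      · rcases (by simpa [he0] using hv : v = i ∨ v = j) with rfl | rfl
        · exact Or.inr hi
        · exact Or.inr hj
      · exact Or.inl ⟨e, heT, hv⟩
      · exact Or.inr hv
    · rintro (⟨e, heT, hv⟩ | hv)
      · exact Or.inl ⟨e, Or.inr heT, hv⟩
      · exact Or.inr hv
  have hchi : ∀ T : Finset (Edge n), e0 ∉ T → chi G (insert e0 T) = - chi G T := by
    intro T hT
    rw [chi, Finset.prod_insert hT, edgeSign, hG]
    simp [chi]
  set f : Finset (Edge n) → ℝ := fun T =>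
    if (vertsOf T ∪ S).card ≤ τ then (ω / n) ^ (vertsOf T ∪ S).card * chi G T else 0 with hf
  set g : Finset (Edge n) → Finset (Edge n) := fun T =>
    if e0 ∈ T then T.erase e0 else insert e0 T with hg
  have key : ∀ T, f T + f (g T) = 0 := by
    intro T
    have main : ∀ T : Finset (Edge n), e0 ∉ T → f T + f (insert e0 T) = 0 := by
      intro T hT
      simp only [hf, hverts T, hchi T hT]
      split <;> ring
    by_cases h : e0 ∈ T
    · have h2 : e0 ∉ T.erase e0 := Finset.notMem_erase _ _
      have := main _ h2
      rw [Finset.insert_erase h] at this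
      simp only [hg, if_pos h]
      linarith
    · simp only [hg, if_neg h]
      exact main T h
  refine Finset.sum_ninvolution g key (fun T hT => ?_) (fun T => Finset.mem_univ _) ?_
  · intro hgT
    apply hT
    have h1 := key T
    rw [hgT] at h1
    linarith
  · intro T
    by_cases h : e0 ∈ T
    · simp [hg, h, Finset.insert_erase h]
    · simp [hg, h, Finset.erase_insert h]

end PlantedClique
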